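/- (Efron's inequality for self-normalized sums) If η_1,...,η_n are independent symmetric real random variables, then for every t > 0, P( |(1/n)∑_{i=1}^n η_i| / sqrt((1/n)∑_{i=1}^n η_i^2) ≥ t ) ≤ 2 exp(-n t^2 / 2). -/

import Mathlib

open MeasureTheory ProbabilityTheory

open scoped Classical ENNReal

noncomputable def sgn (b : Bool) : ℝ := if b then 1 else -1

lemma sgn_sq (b : Bool) (x : ℝ) : (sgn b * x) ^ 2 = x ^ 2 := by
  cases b <;> simp [sgn]

lemma key_mgf (n : ℕ) (lam : ℝ) (b : Fin n → ℝ) :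
    ∑ s : Fin n → Bool, Real.exp (lam * ∑ i, sgn (s i) * b i)
      ≤ 2 ^ n * Real.exp (lam ^ 2 * (∑ i, (b i) ^ 2) / 2) := by
  have h1 : ∀ s : Fin n → Bool, Real.exp (lam * ∑ i, sgn (s i) * b i)
      = ∏ i, Real.exp (lam * (sgn (s i) * b i)) := by
    intro s; rw [← Real.exp_sum, ← Finset.mul_sum]
  simp_rw [h1]
  rw [← Fintype.prod_sum (fun i bo => Real.exp (lam * (sgn bo * b i)))]
  have h2 : ∀ i : Fin n, ∑ bo : Bool, Real.exp (lam * (sgn bo * b i))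
      = 2 * Real.cosh (lam * b i) := by
    intro i
    rw [Fintype.sum_bool, Real.cosh_eq]
    simp [sgn]
    ring
  simp_rw [h2]
  calc ∏ i, 2 * Real.cosh (lam * b i)
      ≤ ∏ i, 2 * Real.exp ((lam * b i) ^ 2 / 2) := by
        apply Finset.prod_le_prod
        · intro i _; positivity
        · intro i _
          have := Real.cosh_le_exp_half_sq (lam * b i)
          nlinarith
    _ = 2 ^ n * Real.exp (lam ^ 2 * (∑ i, (b i) ^ 2) / 2) := by
        rw [Finset.prod_mul_distrib, Finset.prod_const, ← Real.exp_sum]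
        simp only [Finset.card_univ, Fintype.card_fin]
        congr 2
        rw [Finset.mul_sum, Finset.sum_div]
        exact Finset.sum_congr rfl fun i _ => by ring

lemma hoeffding_count (n : ℕ) (hn : 0 < n) (a : Fin n → ℝ) (t : ℝ) (ht : 0 < t) :
    ∑ s : Fin n → Bool, (if t ≤ |(1 / (n : ℝ)) * ∑ i, sgn (s i) * a i| /
        Real.sqrt ((1 / (n : ℝ)) * ∑ i, (sgn (s i) * a i) ^ 2) then (1:ℝ) else 0)
      ≤ 2 ^ n * (2 * Real.exp (-(n : ℝ) * t ^ 2 / 2)) := by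
  have hsq : ∀ s : Fin n → Bool, ∑ i, (sgn (s i) * a i) ^ 2 = ∑ i, (a i) ^ 2 := by
    intro s; exact Finset.sum_congr rfl fun i _ => sgn_sq (s i) (a i)
  set V := ∑ i, (a i) ^ 2 with hV
  have hVnn : 0 ≤ V := Finset.sum_nonneg fun i _ => sq_nonneg _
  by_cases hV0 : V = 0
  · have hforall : ∀ s : Fin n → Bool, ¬ (t ≤ |(1 / (n : ℝ)) * ∑ i, sgn (s i) * a i| /
        Real.sqrt ((1 / (n : ℝ)) * ∑ i, (sgn (s i) * a i) ^ 2)) := by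
      intro s
      rw [hsq s, hV0, mul_zero, Real.sqrt_zero, div_zero]
      linarith
    simp only [hforall, if_false, Finset.sum_const_zero]
    positivity
  · have hVpos : 0 < V := lt_of_le_of_ne hVnn (Ne.symm hV0)
    have hnpos : (0:ℝ) < n := Nat.cast_pos.mpr hn
    set D := Real.sqrt ((1 / (n : ℝ)) * V) with hD
    have hDpos : 0 < D := Real.sqrt_pos.mpr (by positivity)
    set c := (n : ℝ) * t * D with hc
    have hcpos : 0 < c := by positivity
    have hc2 : c ^ 2 = (n : ℝ) * t ^ 2 * V := by
      have hD2 : D ^ 2 = (1 / (n : ℝ)) * V := Real.sq_sqrt (by positivity)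
      rw [hc, mul_pow, mul_pow, hD2]
      field_simp
    set lam := c / V with hlam
    have hlampos : 0 < lam := by positivity
    have hcond : ∀ s : Fin n → Bool,
        (t ≤ |(1 / (n : ℝ)) * ∑ i, sgn (s i) * a i| /
          Real.sqrt ((1 / (n : ℝ)) * ∑ i, (sgn (s i) * a i) ^ 2)) →
        c ≤ |∑ i, sgn (s i) * a i| := by
      intro s h
      rw [hsq s, ← hD, le_div_iff₀ hDpos, abs_mul,
        abs_of_pos (by positivity : (0:ℝ) < 1 / (n:ℝ))] at h
      rw [hc]
      calc (n : ℝ) * t * D ≤ (n : ℝ) * ((1 / (n:ℝ)) * |∑ i, sgn (s i) * a i|) := by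
            rw [mul_assoc]
            exact mul_le_mul_of_nonneg_left (by linarith) (le_of_lt hnpos)
        _ = |∑ i, sgn (s i) * a i| := by field_simp
    -- termwise bound
    have hterm : ∀ s : Fin n → Bool,
        (if t ≤ |(1 / (n : ℝ)) * ∑ i, sgn (s i) * a i| /
          Real.sqrt ((1 / (n : ℝ)) * ∑ i, (sgn (s i) * a i) ^ 2) then (1:ℝ) else 0)
        ≤ Real.exp (lam * ((∑ i, sgn (s i) * a i) - c))
          + Real.exp (lam * ((∑ i, sgn (s i) * (-a i)) - c)) := by
      intro s
      split_ifs with h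
      · have habs := hcond s h
        rcases le_abs.mp habs with h1 | h1
        · have : (0:ℝ) ≤ lam * ((∑ i, sgn (s i) * a i) - c) := by
            apply mul_nonneg (le_of_lt hlampos); linarith
          have h2 := Real.one_le_exp this
          have h3 : (0:ℝ) < Real.exp (lam * ((∑ i, sgn (s i) * (-a i)) - c)) := Real.exp_pos _
          linarith
        · have hneg : (∑ i, sgn (s i) * (-a i)) = -(∑ i, sgn (s i) * a i) := by
            rw [← Finset.sum_neg_distrib]
            exact Finset.sum_congr rfl fun i _ => by ring
          have : (0:ℝ) ≤ lam * ((∑ i, sgn (s i) * (-a i)) - c) := by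
            apply mul_nonneg (le_of_lt hlampos); rw [hneg]; linarith
          have h2 := Real.one_le_exp this
          have h3 : (0:ℝ) < Real.exp (lam * ((∑ i, sgn (s i) * a i) - c)) := Real.exp_pos _
          linarith
      · positivity
    calc ∑ s : Fin n → Bool, (if t ≤ |(1 / (n : ℝ)) * ∑ i, sgn (s i) * a i| /
            Real.sqrt ((1 / (n : ℝ)) * ∑ i, (sgn (s i) * a i) ^ 2) then (1:ℝ) else 0)
        ≤ ∑ s : Fin n → Bool, (Real.exp (lam * ((∑ i, sgn (s i) * a i) - c))
            + Real.exp (lam * ((∑ i, sgn (s i) * (-a i)) - c))) :=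
          Finset.sum_le_sum fun s _ => hterm s
      _ = Real.exp (-(lam * c)) * ((∑ s : Fin n → Bool, Real.exp (lam * ∑ i, sgn (s i) * a i))
            + (∑ s : Fin n → Bool, Real.exp (lam * ∑ i, sgn (s i) * (-a i)))) := by
          rw [Finset.sum_add_distrib, mul_add, Finset.mul_sum, Finset.mul_sum]
          congr 1 <;>
            exact Finset.sum_congr rfl fun s _ => by rw [← Real.exp_add]; congr 1; ring
      _ ≤ Real.exp (-(lam * c)) * ((2:ℝ) ^ n * Real.exp (lam ^ 2 * V / 2)
            + 2 ^ n * Real.exp (lam ^ 2 * V / 2)) := by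
          apply mul_le_mul_of_nonneg_left _ (le_of_lt (Real.exp_pos _))
          apply add_le_add
          · simpa [← hV] using key_mgf n lam a
          · have h := key_mgf n lam (fun i => -a i)
            simpa [neg_sq, ← hV] using h
      _ = 2 ^ n * (2 * Real.exp (lam ^ 2 * V / 2 - lam * c)) := by
          rw [show lam ^ 2 * V / 2 - lam * c = -(lam * c) + lam ^ 2 * V / 2 by ring,
            Real.exp_add]
          ring
      _ = 2 ^ n * (2 * Real.exp (-(n : ℝ) * t ^ 2 / 2)) := by
          have harg : lam ^ 2 * V / 2 - lam * c = -(n : ℝ) * t ^ 2 / 2 := by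
            rw [hlam]
            field_simp
            nlinarith [hc2, hVpos]
          rw [harg]

lemma map_eq_pi {Ω : Type*} [MeasurableSpace Ω] (P : Measure Ω) [IsProbabilityMeasure P]
    {n : ℕ} (X : Fin n → Ω → ℝ) (hm : ∀ i, Measurable (X i))
    (h : iIndepFun X P) :
    Measure.map (fun ω i => X i ω) P = Measure.pi (fun i => P.map (X i)) := by
  haveI : ∀ i, IsProbabilityMeasure (P.map (X i)) :=
    fun i => Measure.isProbabilityMeasure_map (hm i).aemeasurable
  refine (Measure.pi_eq (μ := fun i => P.map (X i)) fun s hs => ?_).symm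
  rw [Measure.map_apply (measurable_pi_lambda _ hm) (MeasurableSet.univ_pi hs)]
  have hpre : (fun ω i => X i ω) ⁻¹' (Set.univ.pi s) = ⋂ i ∈ Finset.univ, X i ⁻¹' s i := by
    ext ω; simp [Set.mem_pi]
  rw [hpre, h.measure_inter_preimage_eq_mul Finset.univ (fun i _ => hs i)]
  exact Finset.prod_congr rfl fun i _ => (Measure.map_apply (hm i) (hs i)).symm

/-- Efron's inequality for self-normalized sums: if `η_1, …, η_n`
are independent symmetric real random variables, then for every `t > 0`,
`P(|n⁻¹ ∑ η_i| / sqrt(n⁻¹ ∑ η_i²) ≥ t) ≤ 2 exp(-n t² / 2)`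
(with the ratio interpreted as `0` when the denominator vanishes). -/
theorem stmt6 {Ω : Type*} [MeasurableSpace Ω] (P : Measure Ω)
    [IsProbabilityMeasure P] (n : ℕ) (hn : 0 < n) (η : Fin n → Ω → ℝ)
    (hmeas : ∀ i, Measurable (η i))
    (hindep : iIndepFun η P)
    (hsymm : ∀ i, Measure.map (η i) P = Measure.map (fun ω => -η i ω) P)
    (t : ℝ) (ht : 0 < t) :
    P {ω | t ≤ |(1 / (n : ℝ)) * ∑ i, η i ω| /
        Real.sqrt ((1 / (n : ℝ)) * ∑ i, (η i ω) ^ 2)} ≤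
      ENNReal.ofReal (2 * Real.exp (-(n : ℝ) * t ^ 2 / 2)) := by
  set B : Set (Fin n → ℝ) := {x | t ≤ |(1 / (n : ℝ)) * ∑ i, x i| /
      Real.sqrt ((1 / (n : ℝ)) * ∑ i, (x i) ^ 2)} with hBdef
  have hB : MeasurableSet B := by
    apply measurableSet_le measurable_const
    apply Measurable.div
    · exact (measurable_const.mul
        (Finset.measurable_sum _ (fun i _ => measurable_pi_apply i))).abs
    · exact (measurable_const.mul
        (Finset.measurable_sum _ (fun i _ => (measurable_pi_apply i).pow_const 2))).sqrt
  set F : (Fin n → Bool) → Ω → (Fin n → ℝ) := fun s ω i => sgn (s i) * η i ω with hFdef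
  have hFmeas : ∀ s, Measurable (F s) := fun s =>
    measurable_pi_lambda _ fun i => measurable_const.mul (hmeas i)
  have hlaw : ∀ s, Measure.map (F s) P = Measure.map (fun ω i => η i ω) P := by
    intro s
    have hind2 : iIndepFun (fun i ω => sgn (s i) * η i ω) P :=
      hindep.comp (fun i x => sgn (s i) * x) (fun i => measurable_const_mul _)
    have h1 := map_eq_pi P η hmeas hindep
    have h2 := map_eq_pi P (fun i ω => sgn (s i) * η i ω)
      (fun i => measurable_const.mul (hmeas i)) hind2
    rw [show Measure.map (F s) P
        = Measure.map (fun ω i => (fun i ω => sgn (s i) * η i ω) i ω) P from rfl, h2, h1]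
    congr 1
    funext i
    show Measure.map (fun ω => sgn (s i) * η i ω) P = Measure.map (η i) P
    rcases hsi : s i with _ | _
    · rw [show (fun ω => sgn false * η i ω) = fun ω => -η i ω from
        funext fun ω => by simp [sgn]]
      exact (hsymm i).symm
    · rw [show (fun ω => sgn true * η i ω) = η i from funext fun ω => by simp [sgn]]
  set A : Set Ω := {ω | t ≤ |(1 / (n : ℝ)) * ∑ i, η i ω| /
      Real.sqrt ((1 / (n : ℝ)) * ∑ i, (η i ω) ^ 2)} with hAdef
  have hAeq : ∀ s, P (F s ⁻¹' B) = P A := by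
    intro s
    rw [← Measure.map_apply (hFmeas s) hB, hlaw s,
      Measure.map_apply (measurable_pi_lambda _ hmeas) hB]
    rfl
  have hmeasAs : ∀ s, MeasurableSet (F s ⁻¹' B) := fun s => (hFmeas s) hB
  set K := ENNReal.ofReal (2 * Real.exp (-(n : ℝ) * t ^ 2 / 2)) with hK
  have hcount : (2 ^ n : ℝ≥0∞) * P A = ∑ s : Fin n → Bool, P (F s ⁻¹' B) := by
    simp only [hAeq, Finset.sum_const, Finset.card_univ]
    simp [Fintype.card_fun, mul_comm]
  have hpoint : ∀ ω, ∑ s : Fin n → Bool, (F s ⁻¹' B).indicator (1 : Ω → ℝ≥0∞) ω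
      ≤ ENNReal.ofReal ((2:ℝ) ^ n * (2 * Real.exp (-(n : ℝ) * t ^ 2 / 2))) := by
    intro ω
    have h0 := hoeffding_count n hn (fun i => η i ω) t ht
    have hconv : ∀ s : Fin n → Bool, (F s ⁻¹' B).indicator (1 : Ω → ℝ≥0∞) ω
        = ENNReal.ofReal (if t ≤ |(1 / (n : ℝ)) * ∑ i, sgn (s i) * (fun i => η i ω) i| /
            Real.sqrt ((1 / (n : ℝ)) * ∑ i, (sgn (s i) * (fun i => η i ω) i) ^ 2)
            then (1:ℝ) else 0) := by
      intro s
      by_cases hmem : ω ∈ F s ⁻¹' B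
      · have hc : t ≤ |(1 / (n : ℝ)) * ∑ i, sgn (s i) * (fun i => η i ω) i| /
            Real.sqrt ((1 / (n : ℝ)) * ∑ i, (sgn (s i) * (fun i => η i ω) i) ^ 2) := hmem
        rw [Set.indicator_of_mem hmem, if_pos hc, ENNReal.ofReal_one]; rfl
      · have hc : ¬ (t ≤ |(1 / (n : ℝ)) * ∑ i, sgn (s i) * (fun i => η i ω) i| /
            Real.sqrt ((1 / (n : ℝ)) * ∑ i, (sgn (s i) * (fun i => η i ω) i) ^ 2)) := hmem
        rw [Set.indicator_of_notMem hmem, if_neg hc, ENNReal.ofReal_zero]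
    simp_rw [hconv]
    rw [← ENNReal.ofReal_sum_of_nonneg (fun s _ => by positivity)]
    exact ENNReal.ofReal_le_ofReal h0
  have hle : ∑ s : Fin n → Bool, P (F s ⁻¹' B) ≤ (2 ^ n : ℝ≥0∞) * K := by
    calc ∑ s : Fin n → Bool, P (F s ⁻¹' B)
        = ∑ s : Fin n → Bool, ∫⁻ ω, (F s ⁻¹' B).indicator (1 : Ω → ℝ≥0∞) ω ∂P :=
          Finset.sum_congr rfl fun s _ => (lintegral_indicator_one (hmeasAs s)).symm
      _ = ∫⁻ ω, ∑ s : Fin n → Bool, (F s ⁻¹' B).indicator (1 : Ω → ℝ≥0∞) ω ∂P :=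
          (lintegral_finset_sum _ fun s _ => measurable_one.indicator (hmeasAs s)).symm
      _ ≤ ∫⁻ ω, ENNReal.ofReal ((2:ℝ) ^ n * (2 * Real.exp (-(n : ℝ) * t ^ 2 / 2))) ∂P :=
          lintegral_mono fun ω => hpoint ω
      _ = (2 ^ n : ℝ≥0∞) * K := by
          rw [lintegral_const, measure_univ, mul_one,
            ENNReal.ofReal_mul (by positivity : (0:ℝ) ≤ (2:ℝ) ^ n), hK]
          congr 1
          rw [ENNReal.ofReal_pow (by norm_num : (0:ℝ) ≤ 2)]
          norm_num
  have final : (2 ^ n : ℝ≥0∞) * P A ≤ (2 ^ n : ℝ≥0∞) * K := hcount ▸ hle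
  have h2n0 : (2 ^ n : ℝ≥0∞) ≠ 0 := by positivity
  have h2ntop : (2 ^ n : ℝ≥0∞) ≠ ⊤ := by
    exact ENNReal.pow_ne_top (by norm_num)
  exact (ENNReal.mul_le_mul_iff_right h2n0 h2ntop).mp final
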